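/- Suppose r : ℤ/fℤ → ℤ satisfies the local string conditions: r_i ∈ {−p, −(p−1), −1, 0, 1, p−1, p} for all i; if r_i ∈ {−1, p−1} then r_{i+1} ∈ {p−1, p}; if r_i ∈ {1, −(p−1)} then r_{i+1} ∈ {−(p−1), −p}; and if r_i ∈ {−p, 0, p} then r_{i+1} ∈ {−1, 0, 1} (these conditions express that the cyclic list (r_0, …, r_{f−1}) is constantly ±(p−1) or breaks up into strings of the form ±(−1, p−1, …, p−1, p) and strings of the form (0, …, 0)). Then for every i ∈ ℤ/fℤ, the integer Σ_{j=1}^{f} p^{f−j}·r_{i+j} equals p^f − 1 if r_{i+1} ∈ {p−1, p}, equals −(p^f − 1) if r_{i+1} ∈ {−(p−1), −p}, and equals 0 otherwise. -/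

import Mathlib

/-- Lemma A.1 of the paper: if `r : ℤ/fℤ → ℤ` satisfies the local string conditions, then
for every `i`, `Σ_{j=1}^{f} p^{f−j}·r_{i+j}` equals `p^f − 1` if `r_{i+1} ∈ {p−1, p}`,
equals `−(p^f − 1)` if `r_{i+1} ∈ {−(p−1), −p}`, and equals `0` otherwise. -/
theorem stmt1 (p f : ℕ) (hp : p.Prime) (hodd : Odd p) (hf : 1 ≤ f)
    (r : ZMod f → ℤ)
    (hvals : ∀ i : ZMod f,
      r i = -(p : ℤ) ∨ r i = -((p : ℤ) - 1) ∨ r i = -1 ∨ r i = 0 ∨ r i = 1 ∨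
        r i = (p : ℤ) - 1 ∨ r i = (p : ℤ))
    (hpos : ∀ i : ZMod f, (r i = -1 ∨ r i = (p : ℤ) - 1) →
      (r (i + 1) = (p : ℤ) - 1 ∨ r (i + 1) = (p : ℤ)))
    (hneg : ∀ i : ZMod f, (r i = 1 ∨ r i = -((p : ℤ) - 1)) →
      (r (i + 1) = -((p : ℤ) - 1) ∨ r (i + 1) = -(p : ℤ)))
    (hzero : ∀ i : ZMod f, (r i = -(p : ℤ) ∨ r i = 0 ∨ r i = (p : ℤ)) →
      (r (i + 1) = -1 ∨ r (i + 1) = 0 ∨ r (i + 1) = 1)) :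
    ∀ i : ZMod f,
      ((r (i + 1) = (p : ℤ) - 1 ∨ r (i + 1) = (p : ℤ)) →
        ∑ j ∈ Finset.Icc 1 f, (p : ℤ) ^ (f - j) * r (i + (j : ZMod f)) = (p : ℤ) ^ f - 1) ∧
      ((r (i + 1) = -((p : ℤ) - 1) ∨ r (i + 1) = -(p : ℤ)) →
        ∑ j ∈ Finset.Icc 1 f, (p : ℤ) ^ (f - j) * r (i + (j : ZMod f)) = -((p : ℤ) ^ f - 1)) ∧
      ((¬(r (i + 1) = (p : ℤ) - 1 ∨ r (i + 1) = (p : ℤ)) ∧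
        ¬(r (i + 1) = -((p : ℤ) - 1) ∨ r (i + 1) = -(p : ℤ))) →
        ∑ j ∈ Finset.Icc 1 f, (p : ℤ) ^ (f - j) * r (i + (j : ZMod f)) = 0) := by
  have hp2 : 2 ≤ p := hp.two_le
  have hpne2 : p ≠ 2 := by rintro rfl; exact (by decide : ¬ Odd 2) hodd
  obtain ⟨m, rfl⟩ : ∃ m, f = m + 1 := ⟨f - 1, by omega⟩
  set q : ℤ := (p : ℤ) with hq
  have hp3 : (3 : ℤ) ≤ q := by
    rw [hq]
    exact_mod_cast (by omega : 3 ≤ p)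
  -- the sum
  set S : ZMod (m + 1) → ℤ :=
    fun i => ∑ j ∈ Finset.Icc 1 (m + 1), q ^ (m + 1 - j) * r (i + (j : ZMod (m + 1))) with hS
  have hmcast : ((m : ℕ) : ZMod (m + 1)) = -1 := by
    have h0 : ((m + 1 : ℕ) : ZMod (m + 1)) = 0 := ZMod.natCast_self (m + 1)
    push_cast at h0
    linear_combination h0
  -- rewrite S as a range sum
  have hST : ∀ i, S i = ∑ j ∈ Finset.range (m + 1), q ^ (m - j) * r (i + 1 + (j : ZMod (m + 1))) := by
    intro i
    simp only [hS]
    rw [← Finset.Ico_add_one_right_eq_Icc, Finset.sum_Ico_eq_sum_range]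
    apply Finset.sum_congr rfl
    intro j hj
    simp only [Finset.mem_range] at hj
    have h2 : m + 1 - (1 + j) = m - j := by omega
    rw [h2]
    congr 1
    push_cast
    ring
  -- the key recursion for S
  have hrec : ∀ i, S (i + 1) = q * S i + (1 - q ^ (m + 1)) * r (i + 1) := by
    intro i
    rw [hST, hST, Finset.sum_range_succ, Finset.mul_sum, Finset.sum_range_succ']
    have hlast : i + 1 + 1 + ((m : ℕ) : ZMod (m + 1)) = i + 1 := by rw [hmcast]; ring
    rw [hlast]
    have hsum : ∀ j ∈ Finset.range m,
        q * (q ^ (m - (j + 1)) * r (i + 1 + ((j + 1 : ℕ) : ZMod (m + 1))))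
          = q ^ (m - j) * r (i + 1 + 1 + (j : ZMod (m + 1))) := by
      intro j hj
      simp only [Finset.mem_range] at hj
      have h1 : m - j = (m - (j + 1)) + 1 := by omega
      have h2 : i + 1 + ((j + 1 : ℕ) : ZMod (m + 1)) = i + 1 + 1 + (j : ZMod (m + 1)) := by
        push_cast; ring
      rw [h1, h2, pow_succ]
      ring
    rw [Finset.sum_congr rfl hsum]
    have h0 : i + 1 + ((0 : ℕ) : ZMod (m + 1)) = i + 1 := by push_cast; ring
    rw [h0]
    have hm0 : m - 0 = m := rfl
    rw [hm0]
    ring_nf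
    rw [Nat.sub_self, pow_zero, one_mul]
    ring
  -- the expected value
  set e : ZMod (m + 1) → ℤ := fun i =>
    if r (i + 1) = q - 1 ∨ r (i + 1) = q then q ^ (m + 1) - 1
    else if r (i + 1) = -(q - 1) ∨ r (i + 1) = -q then -(q ^ (m + 1) - 1)
    else 0 with he
  -- e satisfies the same recursion
  have herec : ∀ i, e (i + 1) = q * e i + (1 - q ^ (m + 1)) * r (i + 1) := by
    intro i
    rcases hvals (i + 1) with h | h | h | h | h | h | h
    · -- r (i+1) = -q
      have h2 := hzero (i + 1) (Or.inl h)
      have hei : e i = -(q ^ (m + 1) - 1) := by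
        rw [he]; simp only
        rw [if_neg (by omega), if_pos (Or.inr h)]
      have hei1 : e (i + 1) = 0 := by
        rw [he]; simp only
        rcases h2 with h2 | h2 | h2 <;> rw [if_neg (by omega), if_neg (by omega)]
      rw [hei, hei1, h]; ring
    · -- r (i+1) = -(q-1)
      have h2 := hneg (i + 1) (Or.inr h)
      have hei : e i = -(q ^ (m + 1) - 1) := by
        rw [he]; simp only
        rw [if_neg (by omega), if_pos (Or.inl h)]
      have hei1 : e (i + 1) = -(q ^ (m + 1) - 1) := by
        rw [he]; simp only
        rw [if_neg (by rcases h2 with h2 | h2 <;> omega), if_pos h2]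
      rw [hei, hei1, h]; ring
    · -- r (i+1) = -1
      have h2 := hpos (i + 1) (Or.inl h)
      have hei : e i = 0 := by
        rw [he]; simp only
        rw [if_neg (by omega), if_neg (by omega)]
      have hei1 : e (i + 1) = q ^ (m + 1) - 1 := by
        rw [he]; simp only
        rw [if_pos h2]
      rw [hei, hei1, h]; ring
    · -- r (i+1) = 0
      have h2 := hzero (i + 1) (Or.inr (Or.inl h))
      have hei : e i = 0 := by
        rw [he]; simp only
        rw [if_neg (by omega), if_neg (by omega)]
      have hei1 : e (i + 1) = 0 := by
        rw [he]; simp only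
        rcases h2 with h2 | h2 | h2 <;> rw [if_neg (by omega), if_neg (by omega)]
      rw [hei, hei1, h]; ring
    · -- r (i+1) = 1
      have h2 := hneg (i + 1) (Or.inl h)
      have hei : e i = 0 := by
        rw [he]; simp only
        rw [if_neg (by omega), if_neg (by omega)]
      have hei1 : e (i + 1) = -(q ^ (m + 1) - 1) := by
        rw [he]; simp only
        rw [if_neg (by rcases h2 with h2 | h2 <;> omega), if_pos h2]
      rw [hei, hei1, h]; ring
    · -- r (i+1) = q - 1
      have h2 := hpos (i + 1) (Or.inr h)
      have hei : e i = q ^ (m + 1) - 1 := by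
        rw [he]; simp only
        rw [if_pos (Or.inl h)]
      have hei1 : e (i + 1) = q ^ (m + 1) - 1 := by
        rw [he]; simp only
        rw [if_pos h2]
      rw [hei, hei1, h]; ring
    · -- r (i+1) = q
      have h2 := hzero (i + 1) (Or.inr (Or.inr h))
      have hei : e i = q ^ (m + 1) - 1 := by
        rw [he]; simp only
        rw [if_pos (Or.inr h)]
      have hei1 : e (i + 1) = 0 := by
        rw [he]; simp only
        rcases h2 with h2 | h2 | h2 <;> rw [if_neg (by omega), if_neg (by omega)]
      rw [hei, hei1, h]; ring
  -- the difference scales by q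
  have hD : ∀ i, S (i + 1) - e (i + 1) = q * (S i - e i) := by
    intro i; rw [hrec, herec]; ring
  have hiter : ∀ n : ℕ, ∀ i : ZMod (m + 1),
      S (i + (n : ZMod (m + 1))) - e (i + (n : ZMod (m + 1))) = q ^ n * (S i - e i) := by
    intro n
    induction n with
    | zero => intro i; simp
    | succ n ih =>
      intro i
      have hcast : i + ((n + 1 : ℕ) : ZMod (m + 1)) = (i + (n : ZMod (m + 1))) + 1 := by
        push_cast; ring
      rw [hcast, hD, ih, pow_succ]
      ring
  have hSe : ∀ i, S i = e i := by
    intro i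
    have h1 := hiter (m + 1) i
    rw [ZMod.natCast_self] at h1
    simp only [add_zero] at h1
    have hq1 : 1 < q ^ (m + 1) := one_lt_pow₀ (by omega) (Nat.succ_ne_zero m)
    have h2 : (q ^ (m + 1) - 1) * (S i - e i) = 0 := by linarith [h1]
    rcases mul_eq_zero.mp h2 with h3 | h3
    · omega
    · linarith
  intro i
  have hfin := hSe i
  rw [hS] at hfin
  simp only at hfin
  refine ⟨?_, ?_, ?_⟩
  · intro h
    rw [hfin, he]; simp only
    rw [if_pos h]
  · intro h
    rw [hfin, he]; simp only
    rw [if_neg (by rcases h with h | h <;> omega), if_pos h]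
  · intro h
    rw [hfin, he]; simp only
    rw [if_neg h.1, if_neg h.2]
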